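/- Let m, n ≥ 0 with m ≠ n, and let N = m + n. Let U = span{e₁,…,e_m} and W = span{e_{m+1},…,e_N} be the standard coordinate subspaces of ℂᴺ. For every chain of subspaces 0 = W₀ ⊆ W₁ ⊆ ⋯ ⊆ W_k = ℂᴺ, the set {g ∈ GL(N,ℂ) : det(g) = 1, g(U) = U, g(W) = W, and g(W_j) = W_j for all j} is a connected subset of the space of N×N complex matrices. (In other words, for m ≠ n the subgroup S(GL(m)×GL(n)) ⊂ SL(m+n) is parabolically connected.) -/

import Mathlib

/-- The coordinate subspace of `ℂ^{m+n}` spanned by the first `m` standard basis vectors. -/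
noncomputable def stdU (m n : ℕ) : Submodule ℂ (Fin (m + n) → ℂ) :=
  Submodule.span ℂ (Set.range fun i : Fin m => (Pi.single (Fin.castAdd n i) 1 : Fin (m + n) → ℂ))

/-- The coordinate subspace of `ℂ^{m+n}` spanned by the last `n` standard basis vectors. -/
noncomputable def stdW (m n : ℕ) : Submodule ℂ (Fin (m + n) → ℂ) :=
  Submodule.span ℂ (Set.range fun i : Fin n => (Pi.single (Fin.natAdd m i) 1 : Fin (m + n) → ℂ))

open Module Submodule Matrix Polynomial

section Aux

lemma li_single {N p : ℕ} (f : Fin p → Fin N) (hf : Function.Injective f) :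
    LinearIndependent ℂ (fun i : Fin p => (Pi.single (f i) 1 : Fin N → ℂ)) := by
  have h := (Pi.basisFun ℂ (Fin N)).linearIndependent.comp f hf
  simpa [Function.comp_def, Pi.basisFun_apply] using h

lemma finrank_stdU (m n : ℕ) : finrank ℂ (stdU m n) = m := by
  rw [stdU, finrank_span_eq_card (li_single _ (Fin.castAdd_injective m n)), Fintype.card_fin]

lemma finrank_stdW (m n : ℕ) : finrank ℂ (stdW m n) = n := by
  have hinj : Function.Injective (Fin.natAdd m : Fin n → Fin (m + n)) := by
    intro a b hab
    have h1 : m + a.val = m + b.val := congrArg Fin.val hab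
    exact Fin.ext (by omega)
  rw [stdW, finrank_span_eq_card (li_single _ hinj), Fintype.card_fin]

lemma stdU_sup_stdW (m n : ℕ) : stdU m n ⊔ stdW m n = ⊤ := by
  rw [stdU, stdW, ← Submodule.span_union, eq_top_iff,
    ← (Pi.basisFun ℂ (Fin (m + n))).span_eq]
  refine Submodule.span_le.2 ?_
  rintro x ⟨i, rfl⟩
  apply Submodule.subset_span
  rw [Pi.basisFun_apply]
  cases i using Fin.addCases with
  | left i => exact Or.inl ⟨i, rfl⟩
  | right i => exact Or.inr ⟨i, rfl⟩

/-- For invertible matrices, invariance (`≤`) implies equality. -/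
lemma map_eq_of_det_ne_zero {N : ℕ} (g : Matrix (Fin N) (Fin N) ℂ) (hg : g.det ≠ 0)
    (p : Submodule ℂ (Fin N → ℂ)) (h : p.map (Matrix.toLin' g) ≤ p) :
    p.map (Matrix.toLin' g) = p := by
  have hinj : Function.Injective (Matrix.toLin' g) := by
    intro x y hxy
    have h2 := congrArg (g⁻¹.mulVec) hxy
    simpa [Matrix.toLin'_apply, Matrix.mulVec_mulVec,
      Matrix.nonsing_inv_mul g (Ne.isUnit hg), Matrix.one_mulVec] using h2
  have hr : finrank ℂ (p.map (Matrix.toLin' g)) = finrank ℂ p := by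
    have h2 := LinearEquiv.finrank_map_eq (LinearEquiv.ofInjectiveEndo (Matrix.toLin' g) hinj) p
    have h3 : (↑(LinearEquiv.ofInjectiveEndo (Matrix.toLin' g) hinj) :
        (Fin N → ℂ) →ₗ[ℂ] (Fin N → ℂ)) = Matrix.toLin' g := rfl
    rwa [h3] at h2
  exact Submodule.eq_of_le_of_finrank_le h (le_of_eq hr.symm)

/-- The key dimension-counting step. -/
lemma step_rank {E : Type*} [AddCommGroup E] [Module ℂ E] [FiniteDimensional ℂ E]
    (U W P Q : Submodule ℂ E) (hPQ : P ≤ Q)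
    (h1 : U ⊓ Q ≤ W ⊔ P) (h2 : W ⊓ Q ≤ U ⊔ P) :
    finrank ℂ ↥(U ⊓ Q) + finrank ℂ ↥(W ⊓ P)
      = finrank ℂ ↥(W ⊓ Q) + finrank ℂ ↥(U ⊓ P) := by
  have key : ∀ A B : Submodule ℂ E, A ⊓ Q ≤ B ⊔ P → A ⊓ Q ⊔ P ≤ B ⊓ Q ⊔ P := by
    intro A B hAB
    refine sup_le ?_ le_sup_right
    calc A ⊓ Q ≤ (B ⊔ P) ⊓ Q := le_inf hAB inf_le_right
      _ = (P ⊔ B) ⊓ Q := by rw [sup_comm]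
      _ = P ⊔ B ⊓ Q := sup_inf_assoc_of_le B hPQ
      _ = B ⊓ Q ⊔ P := by rw [sup_comm]
  have hs : (U ⊓ Q) ⊔ P = (W ⊓ Q) ⊔ P :=
    le_antisymm (key U W h1) (key W U h2)
  have r1 := Submodule.finrank_sup_add_finrank_inf_eq (U ⊓ Q) P
  have r2 := Submodule.finrank_sup_add_finrank_inf_eq (W ⊓ Q) P
  have i1 : U ⊓ Q ⊓ P = U ⊓ P := by rw [inf_assoc, inf_eq_right.mpr hPQ]
  have i2 : W ⊓ Q ⊓ P = W ⊓ P := by rw [inf_assoc, inf_eq_right.mpr hPQ]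
  rw [hs, i1] at r1
  rw [i2] at r2
  omega

/-- The combinatorial heart: if `m ≠ n`, there is a vector `v` in `stdU` or `stdW` and a
subspace `T` not containing `v`, containing the other block, and comparable with every `Wc i`. -/
lemma key_lemma (m n : ℕ) (hmn : m ≠ n) (k : ℕ)
    (Wc : Fin (k + 1) → Submodule ℂ (Fin (m + n) → ℂ))
    (hmono : Monotone Wc) (h0 : Wc 0 = ⊥) (hlast : Wc (Fin.last k) = ⊤) :
    ∃ (v : Fin (m + n) → ℂ) (T : Submodule ℂ (Fin (m + n) → ℂ)),
      v ∉ T ∧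
      ((v ∈ stdU m n ∧ stdW m n ≤ T) ∨ (v ∈ stdW m n ∧ stdU m n ≤ T)) ∧
      (∀ i : Fin (k + 1), v ∈ Wc i ∨ Wc i ≤ T) := by
  by_contra hcon
  -- the two families of inclusions
  have H1 : ∀ j : ℕ, (hj : j < k) →
      stdU m n ⊓ Wc ⟨j + 1, by omega⟩ ≤ stdW m n ⊔ Wc ⟨j, by omega⟩ := by
    intro j hj x hx
    by_contra hxT
    refine hcon ⟨x, stdW m n ⊔ Wc ⟨j, by omega⟩, hxT, Or.inl ⟨hx.1, le_sup_left⟩, fun i => ?_⟩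
    rcases le_or_gt i.val j with h | h
    · exact Or.inr (le_sup_of_le_right (hmono (by rw [Fin.le_def]; exact h)))
    · exact Or.inl (hmono (by rw [Fin.le_def]; exact h) hx.2)
  have H2 : ∀ j : ℕ, (hj : j < k) →
      stdW m n ⊓ Wc ⟨j + 1, by omega⟩ ≤ stdU m n ⊔ Wc ⟨j, by omega⟩ := by
    intro j hj x hx
    by_contra hxT
    refine hcon ⟨x, stdU m n ⊔ Wc ⟨j, by omega⟩, hxT, Or.inr ⟨hx.1, le_sup_left⟩, fun i => ?_⟩
    rcases le_or_gt i.val j with h | h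
    · exact Or.inr (le_sup_of_le_right (hmono (by rw [Fin.le_def]; exact h)))
    · exact Or.inl (hmono (by rw [Fin.le_def]; exact h) hx.2)
  -- telescoping dimension argument
  have main : ∀ j : ℕ, (hj : j ≤ k) →
      finrank ℂ ↥(stdU m n ⊓ Wc ⟨j, by omega⟩) = finrank ℂ ↥(stdW m n ⊓ Wc ⟨j, by omega⟩) := by
    intro j
    induction j with
    | zero =>
      intro _
      have e0 : Wc ⟨0, by omega⟩ = ⊥ := by
        have he : (⟨0, by omega⟩ : Fin (k + 1)) = 0 := rfl
        rw [he, h0]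
      rw [e0, inf_bot_eq, inf_bot_eq]
    | succ j ih =>
      intro hj1
      have hj : j ≤ k := by omega
      have hle : Wc ⟨j, by omega⟩ ≤ Wc ⟨j + 1, by omega⟩ :=
        hmono (by rw [Fin.le_def]; exact Nat.le_succ j)
      have e := step_rank (stdU m n) (stdW m n) (Wc ⟨j, by omega⟩) (Wc ⟨j + 1, by omega⟩)
        hle (H1 j (by omega)) (H2 j (by omega))
      have := ih hj
      omega
  have hk := main k le_rfl
  have ek : Wc ⟨k, by omega⟩ = ⊤ := by
    have he : (⟨k, by omega⟩ : Fin (k + 1)) = Fin.last k := rfl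
    rw [he, hlast]
  rw [ek, inf_top_eq, inf_top_eq, finrank_stdU, finrank_stdW] at hk
  exact hmn hk

end Aux

/-- For `m ≠ n`, the subgroup `S(GL(m) × GL(n)) ⊂ SL(m+n)` (determinant-one block-diagonal
matrices with blocks of sizes `m` and `n`) is parabolically connected: its intersection with
the stabilizer of any chain of subspaces of `ℂ^{m+n}` is connected. -/
theorem sglgl_parabolically_connected (m n : ℕ) (hmn : m ≠ n) :
    ∀ (k : ℕ) (Wc : Fin (k + 1) → Submodule ℂ (Fin (m + n) → ℂ)),
      Monotone Wc → Wc 0 = ⊥ → Wc (Fin.last k) = ⊤ →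
      IsConnected {g : Matrix (Fin (m + n)) (Fin (m + n)) ℂ |
        g.det = 1 ∧
        (stdU m n).map (Matrix.toLin' g) = stdU m n ∧
        (stdW m n).map (Matrix.toLin' g) = stdW m n ∧
        ∀ j : Fin (k + 1), (Wc j).map (Matrix.toLin' g) = Wc j} := by
  intro k Wc hmono h0 hlast
  set S : Set (Matrix (Fin (m + n)) (Fin (m + n)) ℂ) :=
    {g : Matrix (Fin (m + n)) (Fin (m + n)) ℂ |
      g.det = 1 ∧
      (stdU m n).map (Matrix.toLin' g) = stdU m n ∧
      (stdW m n).map (Matrix.toLin' g) = stdW m n ∧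
      ∀ j : Fin (k + 1), (Wc j).map (Matrix.toLin' g) = Wc j} with hS
  -- the collection of invariant subspaces
  set 𝒲 : Set (Submodule ℂ (Fin (m + n) → ℂ)) :=
    insert (stdU m n) (insert (stdW m n) (Set.range Wc)) with h𝒲
  -- the "stabilizer with ≤" set of matrices
  set V : Set (Matrix (Fin (m + n)) (Fin (m + n)) ℂ) :=
    {g | ∀ p ∈ 𝒲, ∀ x ∈ p, g.mulVec x ∈ p} with hV
  have hmemV : ∀ g ∈ S, g ∈ V := by
    rintro g ⟨hdet, hU, hW, hWc⟩ p hp x hx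
    have : Matrix.toLin' g x ∈ p.map (Matrix.toLin' g) := Submodule.mem_map_of_mem hx
    rw [Matrix.toLin'_apply] at this
    simp only [h𝒲, Set.mem_insert_iff, Set.mem_range] at hp
    rcases hp with rfl | rfl | ⟨j, rfl⟩
    · rwa [hU] at this
    · rwa [hW] at this
    · rwa [hWc j] at this
  have hmemS : ∀ g : Matrix (Fin (m + n)) (Fin (m + n)) ℂ, g.det = 1 → g ∈ V → g ∈ S := by
    intro g hdet hgV
    have hne : g.det ≠ 0 := by rw [hdet]; exact one_ne_zero
    have heq : ∀ p ∈ 𝒲, p.map (Matrix.toLin' g) = p := by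
      intro p hp
      refine map_eq_of_det_ne_zero g hne p ?_
      rintro y ⟨x, hx, rfl⟩
      rw [Matrix.toLin'_apply]
      exact hgV p hp x hx
    exact ⟨hdet, heq _ (Or.inl rfl), heq _ (Or.inr (Or.inl rfl)),
      fun j => heq _ (Or.inr (Or.inr ⟨j, rfl⟩))⟩
  have honeV : (1 : Matrix (Fin (m + n)) (Fin (m + n)) ℂ) ∈ V := by
    intro p hp x hx
    rwa [Matrix.one_mulVec]
  have honeS : (1 : Matrix (Fin (m + n)) (Fin (m + n)) ℂ) ∈ S :=
    hmemS 1 (Matrix.det_one) honeV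
  -- segment stability
  have hsegV : ∀ g ∈ V, ∀ z : ℂ, g + z • ((1 : Matrix (Fin (m + n)) (Fin (m + n)) ℂ) - g) ∈ V := by
    intro g hg z p hp x hx
    rw [Matrix.add_mulVec, Matrix.smul_mulVec, Matrix.sub_mulVec, Matrix.one_mulVec]
    exact p.add_mem (hg p hp x hx) (p.smul_mem _ (p.sub_mem hx (hg p hp x hx)))
  have hmulV : ∀ g ∈ V, ∀ h ∈ V, g * h ∈ V := by
    intro g hg h hh p hp x hx
    rw [← Matrix.mulVec_mulVec]
    exact hg p hp _ (hh p hp x hx)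
  -- construct the rank-one corrector
  obtain ⟨v, T, hvT, hcase, hall⟩ := key_lemma m n hmn k Wc hmono h0 hlast
  obtain ⟨φ0, hφ0, hmap0⟩ := T.exists_dual_map_eq_bot_of_notMem hvT inferInstance
  set φ : (Fin (m + n) → ℂ) →ₗ[ℂ] ℂ := (φ0 v)⁻¹ • φ0 with hφ
  have hφv : φ v = 1 := by
    simp [hφ, inv_mul_cancel₀ hφ0]
  have hφT : ∀ x ∈ T, φ x = 0 := by
    intro x hx
    have : φ0 x ∈ T.map φ0 := Submodule.mem_map_of_mem hx
    rw [hmap0, Submodule.mem_bot] at this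
    simp [hφ, this]
  set c : Fin (m + n) → ℂ := fun i => φ (fun j => if i = j then 1 else 0) with hc
  have hφsum : ∀ x : Fin (m + n) → ℂ, φ x = ∑ i, x i * c i := by
    intro x
    rw [φ.pi_apply_eq_sum_univ x]
    simp [hc, smul_eq_mul]
  set Q : Matrix (Fin (m + n)) (Fin (m + n)) ℂ := Matrix.vecMulVec v c with hQ
  have hQvec : ∀ x : Fin (m + n) → ℂ, Q.mulVec x = φ x • v := by
    intro x
    funext i
    rw [hφsum]
    simp only [hQ, Matrix.mulVec, dotProduct, Matrix.vecMulVec_apply, Pi.smul_apply,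
      smul_eq_mul, Finset.sum_mul, Finset.mul_sum]
    refine Finset.sum_congr rfl fun j _ => by ring
  have hcv : c ⬝ᵥ v = 1 := by
    have h1 := hφsum v
    rw [hφv] at h1
    rw [dotProduct]
    calc ∑ j, c j * v j = ∑ j, v j * c j := Finset.sum_congr rfl fun j _ => mul_comm _ _
      _ = 1 := h1.symm
  -- the one-parameter corrector σ s = 1 + (s-1) • Q has det = s and lies in V
  have hdetσ : ∀ s : ℂ, ((1 : Matrix (Fin (m + n)) (Fin (m + n)) ℂ) + (s - 1) • Q).det = s := by
    intro s
    have hsm : (s - 1) • Q = Matrix.vecMulVec ((s - 1) • v) c := by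
      ext i j
      simp [hQ, Matrix.vecMulVec_apply, smul_eq_mul]
      ring
    rw [hsm, Matrix.vecMulVec_eq (Fin 1), Matrix.det_one_add_replicateCol_mul_replicateRow]
    have h2 : c ⬝ᵥ (s - 1) • v = (s - 1) * (c ⬝ᵥ v) := by
      simp only [dotProduct, Pi.smul_apply, smul_eq_mul, Finset.mul_sum]
      exact Finset.sum_congr rfl fun j _ => by ring
    rw [h2, hcv]
    ring
  have hσV : ∀ s : ℂ, ((1 : Matrix (Fin (m + n)) (Fin (m + n)) ℂ) + (s - 1) • Q) ∈ V := by
    intro s p hp x hx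
    rw [Matrix.add_mulVec, Matrix.one_mulVec, Matrix.smul_mulVec, hQvec]
    have hdisj : v ∈ p ∨ ∀ y ∈ p, φ y = 0 := by
      simp only [h𝒲, Set.mem_insert_iff, Set.mem_range] at hp
      rcases hp with rfl | rfl | ⟨j, rfl⟩
      · rcases hcase with ⟨hv, _⟩ | ⟨_, hle⟩
        · exact Or.inl hv
        · exact Or.inr fun y hy => hφT y (hle hy)
      · rcases hcase with ⟨_, hle⟩ | ⟨hv, _⟩
        · exact Or.inr fun y hy => hφT y (hle hy)
        · exact Or.inl hv
      · rcases hall j with hv | hle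
        · exact Or.inl hv
        · exact Or.inr fun y hy => hφT y (hle hy)
    rcases hdisj with hv | hker
    · exact p.add_mem hx (p.smul_mem _ (p.smul_mem _ hv))
    · rw [hker x hx]
      simpa using p.add_mem hx (p.zero_mem)
  -- now build the path from any g ∈ S to 1
  have hjoin : ∀ g ∈ S, JoinedIn S g 1 := by
    intro g hg
    have hgdet : g.det = 1 := hg.1
    have hgV : g ∈ V := hmemV g hg
    set A : ℂ → Matrix (Fin (m + n)) (Fin (m + n)) ℂ :=
      fun z => g + z • ((1 : Matrix (Fin (m + n)) (Fin (m + n)) ℂ) - g) with hA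
    have hA0 : A 0 = g := by simp [hA]
    have hA1 : A 1 = 1 := by simp [hA]
    have hAV : ∀ z, A z ∈ V := fun z => hsegV g hgV z
    -- the determinant polynomial
    set q : Polynomial ℂ :=
      (Matrix.of fun i j => Polynomial.C (g i j) +
        Polynomial.X * Polynomial.C (((1 : Matrix (Fin (m + n)) (Fin (m + n)) ℂ) - g) i j)).det with hq
    have heval : ∀ z : ℂ, q.eval z = (A z).det := by
      intro z
      rw [hq, ← Polynomial.coe_evalRingHom, RingHom.map_det]
      congr 1
      ext i j
      simp [hA, Matrix.add_apply, Matrix.smul_apply, smul_eq_mul, RingHom.mapMatrix_apply]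
    have hq0 : q ≠ 0 := by
      intro h
      have := heval 0
      rw [h, hA0, hgdet] at this
      simp at this
    have hfin : {z : ℂ | q.IsRoot z}.Finite := Polynomial.finite_setOf_isRoot hq0
    have hpc : IsPathConnected ({z : ℂ | q.IsRoot z}ᶜ) :=
      hfin.countable.isPathConnected_compl_of_one_lt_rank
        (by rw [Complex.rank_real_complex]; norm_num)
    have h0c : (0 : ℂ) ∈ ({z : ℂ | q.IsRoot z}ᶜ) := by
      simp only [Set.mem_compl_iff, Set.mem_setOf_eq, Polynomial.IsRoot]
      rw [heval 0, hA0, hgdet]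
      exact one_ne_zero
    have h1c : (1 : ℂ) ∈ ({z : ℂ | q.IsRoot z}ᶜ) := by
      simp only [Set.mem_compl_iff, Set.mem_setOf_eq, Polynomial.IsRoot]
      rw [heval 1, hA1, Matrix.det_one]
      exact one_ne_zero
    obtain ⟨ζ, hζ⟩ := hpc.joinedIn 0 h0c 1 h1c
    have hζne : ∀ t, (A (ζ t)).det ≠ 0 := by
      intro t
      have := hζ t
      simp only [Set.mem_compl_iff, Set.mem_setOf_eq, Polynomial.IsRoot] at this
      rwa [heval (ζ t)] at this
    -- the corrected path
    set F : ℂ → Matrix (Fin (m + n)) (Fin (m + n)) ℂ :=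
      fun z => A z * ((1 : Matrix (Fin (m + n)) (Fin (m + n)) ℂ) + (((A z).det)⁻¹ - 1) • Q) with hF
    have hFmem : ∀ t, F (ζ t) ∈ S := by
      intro t
      refine hmemS _ ?_ (hmulV _ (hAV _) _ (hσV _))
      rw [Matrix.det_mul, hdetσ]
      exact mul_inv_cancel₀ (hζne t)
    have hcontA : Continuous A := by
      apply continuous_const.add
      exact continuous_id.smul continuous_const
    have hcont : Continuous fun t : unitInterval => F (ζ t) := by
      have c1 : Continuous fun t : unitInterval => A (ζ t) := hcontA.comp ζ.continuous
      have cdet : Continuous fun t : unitInterval => (A (ζ t)).det := c1.matrix_det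
      have cinv : Continuous fun t : unitInterval => ((A (ζ t)).det)⁻¹ := by
        rw [continuous_iff_continuousAt]
        intro t
        exact cdet.continuousAt.inv₀ (hζne t)
      have cσ : Continuous fun t : unitInterval =>
          ((1 : Matrix (Fin (m + n)) (Fin (m + n)) ℂ) + (((A (ζ t)).det)⁻¹ - 1) • Q) :=
        continuous_const.add ((cinv.sub continuous_const).smul continuous_const)
      exact c1.matrix_mul cσ
    have hF0 : F (ζ 0) = g := by
      rw [ζ.source, hF]
      simp only [hA0, hgdet]
      norm_num
    have hF1 : F (ζ 1) = 1 := by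
      rw [ζ.target, hF]
      simp only [hA1, Matrix.det_one]
      norm_num
    exact ⟨⟨⟨fun t => F (ζ t), hcont⟩, hF0, hF1⟩, fun t => hFmem t⟩
  have hpcS : IsPathConnected S := by
    refine ⟨1, honeS, ?_⟩
    intro y hy
    exact (hjoin y hy).symm
  exact hpcS.isConnected
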